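/- Let ε, U, V be real parameters with 0 < ε ≤ 2^{−44} and U, V ≥ 64/ε. Suppose that Ω ⊆ ℤ² ∩ ([−U, U] × [−V, V]) has size at least εUV. Then at least ε⁷UV integers n with |n| ≤ 2UV may be written as n = u₁v₁ + u₂v₂ with (u₁, v₁), (u₂, v₂) ∈ Ω. -/

import Mathlib

set_option maxHeartbeats 1000000

open scoped BigOperators

attribute [local instance] Classical.propDecidable

private lemma card_Icc_int (a : ℤ) (ha : 0 ≤ a) :
    ((Finset.Icc (-a) a).card : ℝ) = 2 * a + 1 := by
  have h : (Finset.Icc (-a) a).card = (2 * a + 1).toNat := by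
    rw [Int.card_Icc]; congr 1; ring
  rw [h, show ((2 * a + 1).toNat : ℝ) = (((2 * a + 1).toNat : ℤ) : ℝ) from by norm_cast,
    Int.toNat_of_nonneg (by omega)]
  push_cast; ring

private lemma mem_Icc_of_abs_le {x : ℤ} {W : ℝ} (h : |(x : ℝ)| ≤ W) :
    x ∈ Finset.Icc (-⌊W⌋) ⌊W⌋ := by
  rw [abs_le] at h
  rw [Finset.mem_Icc]
  refine ⟨?_, Int.le_floor.mpr h.2⟩
  rw [neg_le]
  exact Int.le_floor.mpr (by push_cast; linarith [h.1])

private lemma ap_count (s : Finset ℤ) (m N u₀ : ℤ) (hm : 0 < m) (hN : 0 ≤ N)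
    (hs : ∀ u ∈ s, m ∣ (u - u₀) ∧ |u - u₀| ≤ N) :
    (s.card : ℝ) ≤ 2 * N / m + 1 := by
  have hinj : Set.InjOn (fun u => (u - u₀) / m) s := by
    intro a ha b hb hab
    have ea : (a - u₀) / m * m = a - u₀ := Int.ediv_mul_cancel (hs a ha).1
    have eb : (b - u₀) / m * m = b - u₀ := Int.ediv_mul_cancel (hs b hb).1
    simp only at hab
    have : a - u₀ = b - u₀ := by rw [← ea, ← eb, hab]
    omega
  have hsub : s.image (fun u => (u - u₀) / m) ⊆ Finset.Icc (-(N / m)) (N / m) := by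
    intro k hk
    obtain ⟨u, hu, rfl⟩ := Finset.mem_image.mp hk
    have e : (u - u₀) / m * m = u - u₀ := Int.ediv_mul_cancel (hs u hu).1
    have habs := abs_le.mp (hs u hu).2
    rw [Finset.mem_Icc]
    constructor
    · rw [neg_le, Int.le_ediv_iff_mul_le hm]
      have h5 : -((u - u₀) / m) * m = -(u - u₀) := by rw [neg_mul, e]
      omega
    · rw [Int.le_ediv_iff_mul_le hm]
      omega
  have h1 : s.card = (s.image (fun u => (u - u₀) / m)).card :=
    (Finset.card_image_of_injOn hinj).symm
  have h2 := Finset.card_le_card hsub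
  have hnm : 0 ≤ N / m := Int.ediv_nonneg hN hm.le
  have h3 : ((Finset.Icc (-(N / m)) (N / m)).card : ℝ) = 2 * (N / m : ℤ) + 1 :=
    card_Icc_int _ hnm
  have h4 : ((N / m : ℤ) : ℝ) ≤ (N : ℝ) / m := by
    rw [le_div_iff₀ (by exact_mod_cast hm)]
    have h5 : (N / m) * m ≤ N := (Int.le_ediv_iff_mul_le hm).mp le_rfl
    exact_mod_cast h5
  have h6 : ((s.image (fun u => (u - u₀) / m)).card : ℝ) ≤ 2 * (N / m : ℤ) + 1 := by
    rw [← h3]; exact_mod_cast h2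
  rw [h1]
  calc ((s.image (fun u => (u - u₀) / m)).card : ℝ) ≤ 2 * ((N / m : ℤ) : ℝ) + 1 := h6
    _ ≤ 2 * ((N:ℝ)/m) + 1 := by linarith
    _ = 2 * N / m + 1 := by ring

private lemma sum_inv_sq (a : ℤ) (ha : 0 < a) (b : ℤ) :
    ∑ d ∈ Finset.Icc (a + 1) b, ((d : ℝ) ^ 2)⁻¹ ≤ (a : ℝ)⁻¹ := by
  have ha' : (0:ℝ) < a := by exact_mod_cast ha
  rcases lt_or_ge b (a + 1) with hb | hb
  · rw [Finset.Icc_eq_empty (by omega)]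
    simp
    positivity
  · have key : ∀ c : ℤ, a ≤ c →
        ∑ d ∈ Finset.Icc (a + 1) c, ((d : ℝ) ^ 2)⁻¹ ≤ (a : ℝ)⁻¹ - (c : ℝ)⁻¹ := by
      refine Int.le_induction ?_ ?_
      · rw [Finset.Icc_eq_empty (by omega)]
        simp
      · intro c hc ih
        have hc' : (0:ℝ) < c := by
          have : (0:ℤ) < c := lt_of_lt_of_le ha hc
          exact_mod_cast this
        have hc1 : (0:ℝ) < (c:ℝ) + 1 := by linarith
        have hins : Finset.Icc (a + 1) (c + 1) = insert (c + 1) (Finset.Icc (a + 1) c) := by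
          ext x; simp only [Finset.mem_Icc, Finset.mem_insert]; omega
        rw [hins, Finset.sum_insert (by simp [Finset.mem_Icc])]
        have heq : (c : ℝ)⁻¹ - ((c:ℝ) + 1)⁻¹ = ((c:ℝ) * ((c:ℝ) + 1))⁻¹ := by
          field_simp
          ring
        have hstep : (((c:ℝ) + 1) ^ 2)⁻¹ ≤ (c : ℝ)⁻¹ - ((c:ℝ) + 1)⁻¹ := by
          rw [heq]
          apply inv_anti₀ (by positivity)
          nlinarith
        push_cast
        push_cast at ih
        linarith
    have hb' : (0:ℝ) < b := by
      have : (0:ℤ) < b := lt_of_lt_of_le ha (by omega)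
      exact_mod_cast this
    have h0 : (0:ℝ) ≤ (b:ℝ)⁻¹ := by positivity
    linarith [key b (by omega)]

private lemma qcard_bound (ε U V : ℝ) (hε : 0 < ε)
    (hε1 : ε ≤ 1) (hεU : (64:ℝ) ≤ ε * U) (hεV : (64:ℝ) ≤ ε * V)
    (hU0 : (0:ℝ) < U) (hV0 : (0:ℝ) < V) (hU1 : (1:ℝ) ≤ U) (hV1 : (1:ℝ) ≤ V)
    (hfU : (⌊U⌋ : ℝ) ≤ U) (hfU0 : (0:ℤ) ≤ ⌊U⌋) (hfV : (⌊V⌋ : ℝ) ≤ V) (hfV0 : (0:ℤ) ≤ ⌊V⌋)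
    (P : Finset (ℤ × ℤ))
    (hPmem : ∀ p ∈ P, |(p.1 : ℝ)| ≤ U ∧ ε * V / 16 ≤ |(p.2 : ℝ)| ∧ |(p.2 : ℝ)| ≤ V)
    (hP2ne : ∀ p ∈ P, p.2 ≠ 0)
    (hPcard : ε * U * V / 2 ≤ (P.card : ℝ)) :
    ε ^ 2 * U ^ 2 * V ^ 2 / 8 ≤
      (((P ×ˢ P).filter
        (fun x => ((Int.gcd x.1.2 x.2.2 : ℕ) : ℝ) ≤ 4096 / ε ^ 2)).card : ℝ) := by
  set T : ℝ := 4096 / ε ^ 2 with hTdef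
  have hT2 : (4096:ℝ) ≤ T := by
    rw [hTdef, le_div_iff₀ (by positivity)]
    nlinarith
  have hfT : (⌊T⌋ : ℝ) ≤ T := Int.floor_le T
  have hfT1 : T / 2 ≤ (⌊T⌋ : ℝ) := by
    have := Int.sub_one_lt_floor T
    linarith
  have hfT0 : (0:ℤ) < ⌊T⌋ := by
    have : (0:ℝ) < (⌊T⌋:ℝ) := by linarith
    exact_mod_cast this
  set Q : Finset ((ℤ × ℤ) × (ℤ × ℤ)) :=
    (P ×ˢ P).filter (fun x => ((Int.gcd x.1.2 x.2.2 : ℕ) : ℝ) ≤ T) with hQdef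
  set Bad : Finset ((ℤ × ℤ) × (ℤ × ℤ)) :=
    (P ×ˢ P).filter (fun x => ¬ ((Int.gcd x.1.2 x.2.2 : ℕ) : ℝ) ≤ T) with hBaddef
  have hsplit : Q.card + Bad.card = P.card * P.card := by
    rw [hQdef, hBaddef, Finset.card_filter_add_card_filter_not, Finset.card_product]
  -- Bad is small
  set Md : ℤ → Finset (ℤ × ℤ) := fun d =>
    Finset.Icc (-⌊U⌋) ⌊U⌋ ×ˢ ((Finset.Icc (-⌊V⌋) ⌊V⌋).filter (fun v => d ∣ v)) with hMddef
  have hbadsub : Bad ⊆ (Finset.Icc (⌊T⌋ + 1) ⌊V⌋).biUnion (fun d => Md d ×ˢ Md d) := by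
    intro x hx
    rw [hBaddef, Finset.mem_filter, Finset.mem_product] at hx
    obtain ⟨⟨hx1, hx2⟩, hgcd⟩ := hx
    push_neg at hgcd
    have hne1 : x.1.2 ≠ 0 := hP2ne _ hx1
    have habs1 : |(x.1.2 : ℝ)| ≤ V := (hPmem _ hx1).2.2
    have habs2 : |(x.2.2 : ℝ)| ≤ V := (hPmem _ hx2).2.2
    set g : ℕ := Int.gcd x.1.2 x.2.2 with hgdef
    have hgT : ⌊T⌋ + 1 ≤ (g:ℤ) := by
      have h1 : (⌊T⌋:ℝ) < (g:ℝ) := lt_of_le_of_lt hfT hgcd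
      have : ⌊T⌋ < (g:ℤ) := by exact_mod_cast h1
      omega
    have hgV : (g:ℤ) ≤ ⌊V⌋ := by
      have h1 : (g:ℤ) ∣ x.1.2 := (Int.gcd_dvd_left _ _)
      have h2 : (g:ℤ) ≤ |x.1.2| := Int.le_of_dvd (abs_pos.mpr hne1) ((dvd_abs _ _).mpr h1)
      have h4 : |x.1.2| ≤ ⌊V⌋ := Int.le_floor.mpr (by push_cast; exact habs1)
      omega
    rw [Finset.mem_biUnion]
    refine ⟨(g:ℤ), Finset.mem_Icc.mpr ⟨hgT, hgV⟩, ?_⟩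
    rw [Finset.mem_product]
    constructor
    · rw [hMddef]
      rw [Finset.mem_product]
      refine ⟨mem_Icc_of_abs_le (hPmem _ hx1).1, ?_⟩
      rw [Finset.mem_filter]
      exact ⟨mem_Icc_of_abs_le habs1, (Int.gcd_dvd_left _ _)⟩
    · rw [hMddef]
      rw [Finset.mem_product]
      refine ⟨mem_Icc_of_abs_le (hPmem _ hx2).1, ?_⟩
      rw [Finset.mem_filter]
      exact ⟨mem_Icc_of_abs_le habs2, (Int.gcd_dvd_right _ _)⟩
  have hMdcard : ∀ d : ℤ, ⌊T⌋ + 1 ≤ d → d ≤ ⌊V⌋ → ((Md d).card : ℝ) ≤ 9 * U * V / d := by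
    intro d hd1 hd2
    have hd0 : (0:ℤ) < d := by omega
    have hd0' : (0:ℝ) < (d:ℝ) := by exact_mod_cast hd0
    have hdV : (d:ℝ) ≤ V := by
      have : ((d:ℤ):ℝ) ≤ (⌊V⌋:ℝ) := by exact_mod_cast hd2
      linarith
    have hcf : (((Finset.Icc (-⌊V⌋) ⌊V⌋).filter (fun v => d ∣ v)).card : ℝ) ≤ 2 * ⌊V⌋ / d + 1 := by
      apply ap_count _ d ⌊V⌋ 0 hd0 hfV0
      intro u hu
      rw [Finset.mem_filter, Finset.mem_Icc] at hu
      constructor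
      · simpa using hu.2
      · rw [abs_le]; omega
    have hcI : ((Finset.Icc (-⌊U⌋) ⌊U⌋).card : ℝ) = 2 * ⌊U⌋ + 1 := card_Icc_int _ hfU0
    have hcard' : ((Md d).card : ℝ) = ((Finset.Icc (-⌊U⌋) ⌊U⌋).card : ℝ) *
        (((Finset.Icc (-⌊V⌋) ⌊V⌋).filter (fun v => d ∣ v)).card : ℝ) := by
      rw [hMddef]
      push_cast [Finset.card_product]
      ring
    rw [hcard', hcI]
    have h1 : 2 * (⌊U⌋:ℝ) + 1 ≤ 3 * U := by linarith
    have h2 : 2 * (⌊V⌋:ℝ) / d + 1 ≤ 3 * V / d := by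
      rw [div_add' _ _ _ (ne_of_gt hd0'), div_le_div_iff₀ hd0' hd0']
      nlinarith
    have h3 : (0:ℝ) ≤ 2 * (⌊V⌋:ℝ) / d + 1 := by positivity
    calc (2 * (⌊U⌋:ℝ) + 1) * (((Finset.Icc (-⌊V⌋) ⌊V⌋).filter (fun v => d ∣ v)).card : ℝ)
        ≤ (3 * U) * (3 * V / d) := by nlinarith [Finset.card_le_card (Finset.filter_subset (fun v => d ∣ v) (Finset.Icc (-⌊V⌋) ⌊V⌋))]
      _ = 9 * U * V / d := by ring
  have hbadcard : (Bad.card : ℝ) ≤ ε ^ 2 * U ^ 2 * V ^ 2 / 25 := by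
    have h1 := Finset.card_le_card hbadsub
    have h2 := Finset.card_biUnion_le (s := Finset.Icc (⌊T⌋ + 1) ⌊V⌋)
      (t := fun d => Md d ×ˢ Md d)
    have h3 : (Bad.card : ℝ) ≤ ∑ d ∈ Finset.Icc (⌊T⌋ + 1) ⌊V⌋, ((Md d ×ˢ Md d).card : ℝ) := by
      calc (Bad.card : ℝ)
          ≤ (((Finset.Icc (⌊T⌋ + 1) ⌊V⌋).biUnion (fun d => Md d ×ˢ Md d)).card : ℝ) := by
            exact_mod_cast h1
        _ ≤ _ := by exact_mod_cast h2
    have h4 : ∀ d ∈ Finset.Icc (⌊T⌋ + 1) ⌊V⌋,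
        ((Md d ×ˢ Md d).card : ℝ) ≤ (81 * U ^ 2 * V ^ 2) * ((d : ℝ) ^ 2)⁻¹ := by
      intro d hd
      rw [Finset.mem_Icc] at hd
      have hb := hMdcard d hd.1 hd.2
      have h0 : (0:ℝ) < (d:ℝ) := by exact_mod_cast (show (0:ℤ) < d by omega)
      have hMnn : (0:ℝ) ≤ ((Md d).card : ℝ) := by positivity
      rw [Finset.card_product]
      push_cast
      calc ((Md d).card : ℝ) * (Md d).card ≤ (9 * U * V / d) * (9 * U * V / d) := by
            nlinarith
        _ = (81 * U ^ 2 * V ^ 2) * ((d : ℝ) ^ 2)⁻¹ := by field_simp; ring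
    have h5 : ∑ d ∈ Finset.Icc (⌊T⌋ + 1) ⌊V⌋, ((Md d ×ˢ Md d).card : ℝ)
        ≤ (81 * U ^ 2 * V ^ 2) * ∑ d ∈ Finset.Icc (⌊T⌋ + 1) ⌊V⌋, ((d : ℝ) ^ 2)⁻¹ := by
      rw [Finset.mul_sum]
      exact Finset.sum_le_sum h4
    have h6 := sum_inv_sq ⌊T⌋ hfT0 ⌊V⌋
    have h7 : ((⌊T⌋ : ℝ))⁻¹ ≤ 2 / T := by
      rw [inv_eq_one_div, div_le_div_iff₀ (by linarith) (by linarith)]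
      linarith
    have h8 : 2 / T = ε ^ 2 / 2048 := by
      rw [hTdef]
      field_simp
      ring
    have h9 : (0:ℝ) ≤ 81 * U ^ 2 * V ^ 2 := by positivity
    have h10 : (81 * U ^ 2 * V ^ 2) * ∑ d ∈ Finset.Icc (⌊T⌋ + 1) ⌊V⌋, ((d : ℝ) ^ 2)⁻¹
        ≤ (81 * U ^ 2 * V ^ 2) * (ε ^ 2 / 2048) := by
      apply mul_le_mul_of_nonneg_left _ h9
      rw [← h8]
      linarith
    nlinarith
  have hQcard : ε ^ 2 * U ^ 2 * V ^ 2 / 8 ≤ (Q.card : ℝ) := by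
    have hs' : (Q.card : ℝ) + Bad.card = (P.card : ℝ) * P.card := by exact_mod_cast hsplit
    have hp0 : (0:ℝ) ≤ ε * U * V / 2 := by positivity
    have hpp : (ε * U * V / 2) * (ε * U * V / 2) ≤ (P.card : ℝ) * P.card :=
      mul_le_mul hPcard hPcard hp0 (by positivity)
    nlinarith
  exact hQcard

private lemma fiber_bound (ε U V : ℝ) (hε : 0 < ε)
    (hε1 : ε ≤ 1) (hεU : (64:ℝ) ≤ ε * U) (hεV : (64:ℝ) ≤ ε * V)
    (hU0 : (0:ℝ) < U) (hV0 : (0:ℝ) < V) (hU1 : (1:ℝ) ≤ U) (hV1 : (1:ℝ) ≤ V)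
    (hfU : (⌊U⌋ : ℝ) ≤ U) (hfU0 : (0:ℤ) ≤ ⌊U⌋) (hfV : (⌊V⌋ : ℝ) ≤ V) (hfV0 : (0:ℤ) ≤ ⌊V⌋)
    (T : ℝ) (hT0 : (4096:ℝ) ≤ T)
    (P : Finset (ℤ × ℤ))
    (hPmem : ∀ p ∈ P, |(p.1 : ℝ)| ≤ U ∧ ε * V / 16 ≤ |(p.2 : ℝ)| ∧ |(p.2 : ℝ)| ≤ V)
    (Q : Finset ((ℤ × ℤ) × (ℤ × ℤ)))
    (hQmem : ∀ x ∈ Q, x.1 ∈ P ∧ x.2 ∈ P ∧ ((Int.gcd x.1.2 x.2.2 : ℕ) : ℝ) ≤ T)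
    (n : ℤ) :
    ((Q.filter (fun x => x.1.1 * x.1.2 + x.2.1 * x.2.2 = n)).card : ℝ)
      ≤ 9 * V ^ 2 * (64 * U * T / (ε * V) + 1) := by
  have hTpos : (0:ℝ) < T := by linarith
  have hB0 : (0:ℝ) ≤ 64 * U * T / (ε * V) + 1 := by positivity
  set Qn := Q.filter (fun x => x.1.1 * x.1.2 + x.2.1 * x.2.2 = n) with hQndef
  have hQnmem : ∀ x ∈ Qn, x.1 ∈ P ∧ x.2 ∈ P ∧ ((Int.gcd x.1.2 x.2.2 : ℕ) : ℝ) ≤ T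
      ∧ x.1.1 * x.1.2 + x.2.1 * x.2.2 = n := by
    intro x hx
    rw [hQndef, Finset.mem_filter] at hx
    exact ⟨(hQmem x hx.1).1, (hQmem x hx.1).2.1, (hQmem x hx.1).2.2, hx.2⟩
  set π : (ℤ × ℤ) × (ℤ × ℤ) → ℤ × ℤ := fun x => (x.1.2, x.2.2) with hπdef
  have hmap : ∀ x ∈ Qn, π x ∈ Qn.image π := fun x hx => Finset.mem_image_of_mem _ hx
  have hcnt := Finset.card_eq_sum_card_fiberwise hmap
  -- image cardinality
  have himgcard : ((Qn.image π).card : ℝ) ≤ 9 * V ^ 2 := by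
    have hsub : Qn.image π ⊆ Finset.Icc (-⌊V⌋) ⌊V⌋ ×ˢ Finset.Icc (-⌊V⌋) ⌊V⌋ := by
      intro y hy
      obtain ⟨x, hx, rfl⟩ := Finset.mem_image.mp hy
      rw [Finset.mem_product]
      exact ⟨mem_Icc_of_abs_le (hPmem _ (hQnmem x hx).1).2.2,
        mem_Icc_of_abs_le (hPmem _ (hQnmem x hx).2.1).2.2⟩
    have h1 := Finset.card_le_card hsub
    have h2 : ((Finset.Icc (-⌊V⌋) ⌊V⌋ ×ˢ Finset.Icc (-⌊V⌋) ⌊V⌋).card : ℝ)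
        = (2 * ⌊V⌋ + 1) * (2 * ⌊V⌋ + 1) := by
      rw [Finset.card_product]
      push_cast
      rw [card_Icc_int _ hfV0]
    calc ((Qn.image π).card : ℝ)
        ≤ ((Finset.Icc (-⌊V⌋) ⌊V⌋ ×ˢ Finset.Icc (-⌊V⌋) ⌊V⌋).card : ℝ) := by exact_mod_cast h1
      _ = (2 * ⌊V⌋ + 1) * (2 * ⌊V⌋ + 1) := h2
      _ ≤ 9 * V ^ 2 := by
          have hc : (0:ℝ) ≤ (⌊V⌋:ℝ) := by exact_mod_cast hfV0
          nlinarith [hfV, hV1, hc]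
  -- fiber bound
  have hfib1 : ∀ y ∈ Qn.image π,
      ((Qn.filter (fun x => π x = y)).card : ℝ) ≤ 64 * U * T / (ε * V) + 1 := by
    intro y hy
    set F := Qn.filter (fun x => π x = y) with hFdef
    rcases Finset.eq_empty_or_nonempty F with hF | hF
    · rw [hF]
      simpa using hB0
    obtain ⟨x₀, hx₀⟩ := hF
    have hFmem : ∀ x ∈ F, x.1 ∈ P ∧ x.2 ∈ P ∧ ((Int.gcd x.1.2 x.2.2 : ℕ) : ℝ) ≤ T
        ∧ x.1.1 * x.1.2 + x.2.1 * x.2.2 = n ∧ x.1.2 = y.1 ∧ x.2.2 = y.2 := by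
      intro x hx
      rw [hFdef, Finset.mem_filter] at hx
      have h1 := hQnmem x hx.1
      have h2 : (x.1.2, x.2.2) = y := hx.2
      exact ⟨h1.1, h1.2.1, h1.2.2.1, h1.2.2.2, (Prod.ext_iff.mp h2).1, (Prod.ext_iff.mp h2).2⟩
    obtain ⟨hx₀1, hx₀2, hx₀g, hx₀n, hx₀v, hx₀w⟩ := hFmem x₀ hx₀
    have hwabs : ε * V / 16 ≤ |(y.2 : ℝ)| := by rw [← hx₀w]; exact (hPmem _ hx₀2).2.1
    have hvabs : ε * V / 16 ≤ |(y.1 : ℝ)| := by rw [← hx₀v]; exact (hPmem _ hx₀1).2.1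
    have hvne : y.1 ≠ 0 := by
      intro h
      rw [h] at hvabs
      simp at hvabs
      nlinarith
    have hwne : y.2 ≠ 0 := by
      intro h
      rw [h] at hwabs
      simp at hwabs
      nlinarith
    set g : ℕ := Int.gcd y.1 y.2 with hgdef
    have hg0 : 0 < g := Int.gcd_pos_iff.mpr (Or.inl hvne)
    have hg0' : (0:ℝ) < (g:ℝ) := by exact_mod_cast hg0
    have hgT : ((g:ℕ) : ℝ) ≤ T := by
      rw [hgdef, ← hx₀v, ← hx₀w]
      exact hx₀g
    set v₁ : ℤ := y.1 / (g:ℤ) with hv₁def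
    set v₂ : ℤ := y.2 / (g:ℤ) with hv₂def
    have hv₁ : v₁ * (g:ℤ) = y.1 := Int.ediv_mul_cancel (Int.gcd_dvd_left _ _)
    have hv₂ : v₂ * (g:ℤ) = y.2 := Int.ediv_mul_cancel (Int.gcd_dvd_right _ _)
    have hv₂ne : v₂ ≠ 0 := by
      intro h
      rw [h, zero_mul] at hv₂
      exact hwne hv₂.symm
    have hcop : Int.gcd v₁ v₂ = 1 := Int.gcd_div_gcd_div_gcd hg0
    set m : ℤ := |v₂| with hmdef
    have hm0 : 0 < m := abs_pos.mpr hv₂ne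
    have hm0' : (0:ℝ) < (m:ℝ) := by exact_mod_cast hm0
    -- injectivity of first coordinate on F
    have hinj : Set.InjOn (fun x : (ℤ × ℤ) × ℤ × ℤ => x.1.1) ↑F := by
      intro a ha b hb hab
      simp only at hab
      obtain ⟨ha1, ha2, hag, han, hav, haw⟩ := hFmem a ha
      obtain ⟨hb1, hb2, hbg, hbn, hbv, hbw⟩ := hFmem b hb
      have h21 : a.2.1 = b.2.1 := by
        have heq : a.2.1 * y.2 = b.2.1 * y.2 := by
          have h := han.trans hbn.symm
          rw [hav, haw, hbv, hbw, hab] at h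
          linarith
        exact mul_right_cancel₀ hwne heq
      have e1 : a.1 = b.1 := Prod.ext hab (hav.trans hbv.symm)
      have e2 : a.2 = b.2 := Prod.ext h21 (haw.trans hbw.symm)
      exact Prod.ext e1 e2
    have hcard_eq : F.card = (F.image (fun x => x.1.1)).card :=
      (Finset.card_image_of_injOn hinj).symm
    have hsap : ∀ u ∈ F.image (fun x => x.1.1),
        m ∣ (u - x₀.1.1) ∧ |u - x₀.1.1| ≤ 2 * ⌊U⌋ := by
      intro u hu
      obtain ⟨x, hx, rfl⟩ := Finset.mem_image.mp hu
      obtain ⟨hx1, hx2, hxg, hxn, hxv, hxw⟩ := hFmem x hx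
      constructor
      · have heq : y.1 * (x.1.1 - x₀.1.1) = y.2 * (x₀.2.1 - x.2.1) := by
          have e1 : x.1.1 * y.1 + x.2.1 * y.2 = n := by rw [← hxv, ← hxw]; exact hxn
          have e2 : x₀.1.1 * y.1 + x₀.2.1 * y.2 = n := by rw [← hx₀v, ← hx₀w]; exact hx₀n
          linear_combination e1 - e2
        have heq2 : (g:ℤ) * (v₁ * (x.1.1 - x₀.1.1)) = (g:ℤ) * (v₂ * (x₀.2.1 - x.2.1)) := by
          have hyv : (g:ℤ) * v₁ = y.1 := by linear_combination hv₁
          have hyw : (g:ℤ) * v₂ = y.2 := by linear_combination hv₂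
          calc (g:ℤ) * (v₁ * (x.1.1 - x₀.1.1)) = ((g:ℤ) * v₁) * (x.1.1 - x₀.1.1) := by ring
            _ = y.1 * (x.1.1 - x₀.1.1) := by rw [hyv]
            _ = y.2 * (x₀.2.1 - x.2.1) := heq
            _ = ((g:ℤ) * v₂) * (x₀.2.1 - x.2.1) := by rw [hyw]
            _ = (g:ℤ) * (v₂ * (x₀.2.1 - x.2.1)) := by ring
        have hgne : ((g:ℕ):ℤ) ≠ 0 := by exact_mod_cast hg0.ne'
        have heq3 : v₁ * (x.1.1 - x₀.1.1) = v₂ * (x₀.2.1 - x.2.1) :=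
          mul_left_cancel₀ hgne heq2
        have hdvd : v₂ ∣ v₁ * (x.1.1 - x₀.1.1) := ⟨x₀.2.1 - x.2.1, heq3⟩
        have hcop' : IsCoprime v₂ v₁ :=
          Int.isCoprime_iff_gcd_eq_one.mpr (by rw [Int.gcd_comm]; exact hcop)
        have hd2 := hcop'.dvd_of_dvd_mul_left hdvd
        exact (abs_dvd _ _).mpr hd2
      · have h1 : |x.1.1| ≤ ⌊U⌋ :=
          Int.le_floor.mpr (by push_cast; exact (hPmem _ hx1).1)
        have h2 : |x₀.1.1| ≤ ⌊U⌋ :=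
          Int.le_floor.mpr (by push_cast; exact (hPmem _ hx₀1).1)
        have := abs_sub (x.1.1) (x₀.1.1)
        omega
    have hap : ((F.image (fun x => x.1.1)).card : ℝ) ≤ 2 * (2 * (⌊U⌋:ℝ)) / m + 1 := by
      have h := ap_count (F.image (fun x => x.1.1)) m (2 * ⌊U⌋) x₀.1.1 hm0 (by omega) hsap
      push_cast at h
      linarith
    -- lower bound for m
    have hmg : (m:ℝ) * (g:ℝ) = |(y.2 : ℝ)| := by
      have h1 : ((v₂ * (g:ℤ) : ℤ) : ℝ) = ((y.2 : ℤ) : ℝ) := by exact_mod_cast congrArg (fun z : ℤ => (z:ℝ)) hv₂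
      have h2 : (m:ℝ) = |(v₂:ℝ)| := by rw [hmdef]; push_cast; ring
      calc (m:ℝ) * (g:ℝ) = |(v₂:ℝ)| * |((g:ℤ):ℝ)| := by
            rw [h2]
            congr 1
            rw [abs_of_nonneg (by positivity)]
            push_cast
            ring
        _ = |(v₂:ℝ) * ((g:ℤ):ℝ)| := (abs_mul _ _).symm
        _ = |(y.2:ℝ)| := by rw [show (v₂:ℝ) * ((g:ℤ):ℝ) = ((v₂ * (g:ℤ) : ℤ):ℝ) by push_cast; ring, h1]
    have hm_lb : ε * V / (16 * T) ≤ (m:ℝ) := by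
      rw [div_le_iff₀ (by positivity)]
      have hwV : ε * V / 16 ≤ (m:ℝ) * (g:ℝ) := by rw [hmg]; exact hwabs
      nlinarith
    -- final bound on fiber
    have hfinal : 2 * (2 * (⌊U⌋:ℝ)) / m + 1 ≤ 64 * U * T / (ε * V) + 1 := by
      have h2 : ε * V ≤ (m:ℝ) * (16 * T) := (div_le_iff₀ (by positivity)).mp hm_lb
      have h1 : 2 * (2 * (⌊U⌋:ℝ)) / m ≤ 64 * U * T / (ε * V) := by
        rw [div_le_div_iff₀ hm0' (by positivity)]
        nlinarith [mul_le_mul_of_nonneg_left h2 (show (0:ℝ) ≤ 4 * U by positivity),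
          mul_le_mul_of_nonneg_right hfU (show (0:ℝ) ≤ 4 * (ε * V) by positivity)]
      linarith
    have : ((F.image (fun x => x.1.1)).card : ℝ) ≤ 64 * U * T / (ε * V) + 1 := by
      calc ((F.image (fun x => x.1.1)).card : ℝ) ≤ 2 * (2 * (⌊U⌋:ℝ)) / m + 1 := hap
        _ ≤ 64 * U * T / (ε * V) + 1 := hfinal
    rw [hcard_eq]
    exact this
  -- combine
  have hsum : (Qn.card : ℝ) ≤ ((Qn.image π).card : ℝ) * (64 * U * T / (ε * V) + 1) := by
    rw [hcnt]
    push_cast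
    calc ∑ y ∈ Qn.image π, ((Qn.filter (fun x => π x = y)).card : ℝ)
        ≤ ∑ y ∈ Qn.image π, (64 * U * T / (ε * V) + 1) := Finset.sum_le_sum hfib1
      _ = ((Qn.image π).card : ℝ) * (64 * U * T / (ε * V) + 1) := by
          rw [Finset.sum_const, nsmul_eq_mul]
  calc (Qn.card : ℝ) ≤ ((Qn.image π).card : ℝ) * (64 * U * T / (ε * V) + 1) := hsum
    _ ≤ 9 * V ^ 2 * (64 * U * T / (ε * V) + 1) := by
        apply mul_le_mul_of_nonneg_right himgcard hB0

private lemma key (ε U V : ℝ) (hε : 0 < ε) (hε' : ε ≤ 2 ^ (-44 : ℤ))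
    (hU : 64 / ε ≤ U) (hV : 64 / ε ≤ V) (hVU : V ≤ U)
    (Ω : Finset (ℤ × ℤ)) (hΩ : ∀ p ∈ Ω, |(p.1 : ℝ)| ≤ U ∧ |(p.2 : ℝ)| ≤ V)
    (hcard : ε * U * V ≤ (Ω.card : ℝ)) :
    ε ^ 7 * U * V ≤
      (((Finset.Icc (-⌊2 * U * V⌋) ⌊2 * U * V⌋).filter
        (fun n : ℤ => ∃ p ∈ Ω, ∃ q ∈ Ω, n = p.1 * p.2 + q.1 * q.2)).card : ℝ) := by
  have hε44 : ε * 17592186044416 ≤ 1 := by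
    have h2 : (2:ℝ) ^ (-44 : ℤ) = (17592186044416 : ℝ)⁻¹ := by
      norm_num [zpow_neg]
    rw [h2] at hε'
    nlinarith [hε']
  have hε1 : ε ≤ 1 := by nlinarith
  have hεU : (64:ℝ) ≤ ε * U := by
    rw [div_le_iff₀ hε] at hU; linarith
  have hεV : (64:ℝ) ≤ ε * V := by
    rw [div_le_iff₀ hε] at hV; linarith
  have hU0 : (0:ℝ) < U := by nlinarith
  have hV0 : (0:ℝ) < V := by nlinarith
  have hU1 : (1:ℝ) ≤ U := by nlinarith
  have hV1 : (1:ℝ) ≤ V := by nlinarith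
  have hfU : (⌊U⌋ : ℝ) ≤ U := Int.floor_le U
  have hfU0 : (0:ℤ) ≤ ⌊U⌋ := Int.floor_nonneg.mpr hU0.le
  have hfV : (⌊V⌋ : ℝ) ≤ V := Int.floor_le V
  have hfV0 : (0:ℤ) ≤ ⌊V⌋ := Int.floor_nonneg.mpr hV0.le
  set P : Finset (ℤ × ℤ) := Ω.filter (fun p => ε * V / 16 ≤ |((p.2 : ℤ) : ℝ)|) with hPdef
  have hPsub : P ⊆ Ω := Finset.filter_subset _ _
  have hPmem : ∀ p ∈ P, |(p.1 : ℝ)| ≤ U ∧ ε * V / 16 ≤ |(p.2 : ℝ)| ∧ |(p.2 : ℝ)| ≤ V := by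
    intro p hp
    rw [hPdef, Finset.mem_filter] at hp
    exact ⟨(hΩ p hp.1).1, hp.2, (hΩ p hp.1).2⟩
  have hP2ne : ∀ p ∈ P, p.2 ≠ 0 := by
    intro p hp h0
    have := (hPmem p hp).2.1
    rw [h0] at this
    simp at this
    nlinarith
  -- card of P
  have hsd : Ω \ P ⊆ Finset.Icc (-⌊U⌋) ⌊U⌋ ×ˢ Finset.Icc (-⌊ε * V / 16⌋) ⌊ε * V / 16⌋ := by
    intro p hp
    rw [Finset.mem_sdiff] at hp
    obtain ⟨h1, h2⟩ := hp
    rw [Finset.mem_product]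
    refine ⟨mem_Icc_of_abs_le (hΩ p h1).1, mem_Icc_of_abs_le ?_⟩
    rw [hPdef, Finset.mem_filter] at h2
    push_neg at h2
    exact le_of_lt (h2 h1)
  have hfsV : (⌊ε * V / 16⌋ : ℝ) ≤ ε * V / 16 := Int.floor_le _
  have hfsV0 : (0:ℤ) ≤ ⌊ε * V / 16⌋ := Int.floor_nonneg.mpr (by positivity)
  have hsdcard : ((Ω \ P).card : ℝ) ≤ (2 * ⌊U⌋ + 1) * (2 * ⌊ε * V / 16⌋ + 1) := by
    have h1 := Finset.card_le_card hsd
    have h2 : (Finset.Icc (-⌊U⌋) ⌊U⌋ ×ˢ Finset.Icc (-⌊ε * V / 16⌋) ⌊ε * V / 16⌋).card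
        = (Finset.Icc (-⌊U⌋) ⌊U⌋).card * (Finset.Icc (-⌊ε * V / 16⌋) ⌊ε * V / 16⌋).card :=
      Finset.card_product _ _
    have h3 : (((Finset.Icc (-⌊U⌋) ⌊U⌋).card : ℝ)) = 2 * ⌊U⌋ + 1 := card_Icc_int _ hfU0
    have h4 : (((Finset.Icc (-⌊ε * V / 16⌋) ⌊ε * V / 16⌋).card : ℝ)) = 2 * ⌊ε * V / 16⌋ + 1 :=
      card_Icc_int _ hfsV0
    calc ((Ω \ P).card : ℝ) ≤ ((Finset.Icc (-⌊U⌋) ⌊U⌋ ×ˢ Finset.Icc (-⌊ε * V / 16⌋) ⌊ε * V / 16⌋).card : ℝ) := by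
          exact_mod_cast h1
      _ = (2 * ⌊U⌋ + 1) * (2 * ⌊ε * V / 16⌋ + 1) := by rw [h2]; push_cast; rw [h3, h4]
  have hPcard : ε * U * V / 2 ≤ (P.card : ℝ) := by
    have hsplit : (Ω \ P).card + P.card = Ω.card := Finset.card_sdiff_add_card_eq_card hPsub
    have hsplit' : ((Ω \ P).card : ℝ) + P.card = Ω.card := by exact_mod_cast hsplit
    have hfU' : (0:ℝ) ≤ (⌊U⌋:ℝ) := by exact_mod_cast hfU0
    have hfsV' : (0:ℝ) ≤ (⌊ε * V / 16⌋:ℝ) := by exact_mod_cast hfsV0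
    -- (2⌊U⌋+1)(2⌊εV/16⌋+1) ≤ 3U * (9εV/64) = 27/64 εUV
    have hb1 : (2 * (⌊U⌋:ℝ) + 1) ≤ 3 * U := by linarith
    have hb2 : (2 * (⌊ε * V / 16⌋:ℝ) + 1) ≤ 9 * (ε * V) / 64 := by nlinarith
    have hb : ((Ω \ P).card : ℝ) ≤ 27 * (ε * U * V) / 64 := by
      calc ((Ω \ P).card : ℝ) ≤ (2 * ⌊U⌋ + 1) * (2 * ⌊ε * V / 16⌋ + 1) := hsdcard
        _ ≤ (3 * U) * (9 * (ε * V) / 64) := by nlinarith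
        _ = 27 * (ε * U * V) / 64 := by ring
    linarith
  set T : ℝ := 4096 / ε ^ 2 with hTdef
  have hT0 : (4096:ℝ) ≤ T := by
    rw [hTdef, le_div_iff₀ (by positivity)]
    nlinarith
  have hTpos : (0:ℝ) < T := by linarith
  set Q : Finset ((ℤ × ℤ) × (ℤ × ℤ)) :=
    (P ×ˢ P).filter (fun x => ((Int.gcd x.1.2 x.2.2 : ℕ) : ℝ) ≤ T) with hQdef
  have hQcard : ε ^ 2 * U ^ 2 * V ^ 2 / 8 ≤ (Q.card : ℝ) := by
    rw [hQdef, hTdef]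
    exact qcard_bound ε U V hε hε1 hεU hεV hU0 hV0 hU1 hV1 hfU hfU0 hfV hfV0
      P hPmem hP2ne hPcard
  have hQmem : ∀ x ∈ Q, x.1 ∈ P ∧ x.2 ∈ P ∧ ((Int.gcd x.1.2 x.2.2 : ℕ) : ℝ) ≤ T := by
    intro x hx
    rw [hQdef, Finset.mem_filter, Finset.mem_product] at hx
    exact ⟨hx.1.1, hx.1.2, hx.2⟩
  have hfib : ∀ n : ℤ,
      ((Q.filter (fun x => x.1.1 * x.1.2 + x.2.1 * x.2.2 = n)).card : ℝ)
        ≤ 9 * V ^ 2 * (64 * U * T / (ε * V) + 1) :=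
    fun n => fiber_bound ε U V hε hε1 hεU hεV hU0 hV0 hU1 hV1 hfU hfU0 hfV hfV0
      T hT0 P hPmem Q hQmem n
  set S := Q.image (fun x => x.1.1 * x.1.2 + x.2.1 * x.2.2) with hSdef
  have hQS : (Q.card : ℝ) ≤ (S.card : ℝ) * (9 * V ^ 2 * (64 * U * T / (ε * V) + 1)) := by
    have hcnt2 := Finset.card_eq_sum_card_fiberwise
      (f := fun x : (ℤ × ℤ) × ℤ × ℤ => x.1.1 * x.1.2 + x.2.1 * x.2.2) (s := Q) (t := S)
      (fun x hx => Finset.mem_image_of_mem _ hx)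
    rw [hcnt2]
    push_cast
    calc ∑ nn ∈ S, (((Q.filter (fun x => x.1.1 * x.1.2 + x.2.1 * x.2.2 = nn)).card : ℝ))
        ≤ ∑ nn ∈ S, (9 * V ^ 2 * (64 * U * T / (ε * V) + 1)) :=
          Finset.sum_le_sum (fun nn _ => hfib nn)
      _ = (S.card : ℝ) * (9 * V ^ 2 * (64 * U * T / (ε * V) + 1)) := by
          rw [Finset.sum_const, nsmul_eq_mul]
  have hStarget : S ⊆ (Finset.Icc (-⌊2 * U * V⌋) ⌊2 * U * V⌋).filter
      (fun n : ℤ => ∃ p ∈ Ω, ∃ q ∈ Ω, n = p.1 * p.2 + q.1 * q.2) := by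
    intro nn hnn
    obtain ⟨x, hx, rfl⟩ := Finset.mem_image.mp hnn
    have hx' : x.1 ∈ P ∧ x.2 ∈ P := by
      rw [hQdef, Finset.mem_filter, Finset.mem_product] at hx
      exact hx.1
    have h11 : |(x.1.1 : ℝ)| ≤ U := (hPmem _ hx'.1).1
    have h12 : |(x.1.2 : ℝ)| ≤ V := (hPmem _ hx'.1).2.2
    have h21 : |(x.2.1 : ℝ)| ≤ U := (hPmem _ hx'.2).1
    have h22 : |(x.2.2 : ℝ)| ≤ V := (hPmem _ hx'.2).2.2
    have habs : |((x.1.1 * x.1.2 + x.2.1 * x.2.2 : ℤ) : ℝ)| ≤ 2 * U * V := by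
      push_cast
      calc |(x.1.1 : ℝ) * x.1.2 + (x.2.1 : ℝ) * x.2.2|
          ≤ |(x.1.1 : ℝ) * x.1.2| + |(x.2.1 : ℝ) * x.2.2| := abs_add_le _ _
        _ = |(x.1.1 : ℝ)| * |(x.1.2 : ℝ)| + |(x.2.1 : ℝ)| * |(x.2.2 : ℝ)| := by
            rw [abs_mul, abs_mul]
        _ ≤ U * V + U * V := by
            apply add_le_add
            · exact mul_le_mul h11 h12 (abs_nonneg _) hU0.le
            · exact mul_le_mul h21 h22 (abs_nonneg _) hU0.le
        _ = 2 * U * V := by ring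
    rw [Finset.mem_filter]
    exact ⟨mem_Icc_of_abs_le habs, x.1, hPsub hx'.1, x.2, hPsub hx'.2, rfl⟩
  have hR0 : (0:ℝ) < 9 * V ^ 2 * (64 * U * T / (ε * V) + 1) := by positivity
  have hcardS : ε ^ 2 * U ^ 2 * V ^ 2 / 8
      ≤ (S.card : ℝ) * (9 * V ^ 2 * (64 * U * T / (ε * V) + 1)) := le_trans hQcard hQS
  have hεa : ε ≤ 1 / 17592186044416 := by
    rw [le_div_iff₀ (by norm_num : (0:ℝ) < 17592186044416)]
    linarith
  have hsq : ε ^ 2 ≤ 1 / 309485009821345068724781056 := by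
    nlinarith [mul_le_mul hεa hεa hε.le (by norm_num : (0:ℝ) ≤ 1 / 17592186044416)]
  have hkey : ε ^ 7 * U * V * (9 * V ^ 2 * (64 * U * T / (ε * V) + 1))
      ≤ ε ^ 2 * U ^ 2 * V ^ 2 / 8 := by
    have hexp : ε ^ 7 * U * V * (9 * V ^ 2 * (64 * U * T / (ε * V) + 1))
        = 2359296 * ε ^ 4 * U ^ 2 * V ^ 2 + 9 * ε ^ 7 * U * V ^ 3 := by
      rw [hTdef]
      field_simp
      ring
    rw [hexp]
    have e1 : 2359296 * ε ^ 4 * U ^ 2 * V ^ 2 ≤ ε ^ 2 * U ^ 2 * V ^ 2 / 16 := by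
      have h1 : 2359296 * ε ^ 2 ≤ 1 / 16 := by nlinarith [hsq]
      nlinarith [mul_le_mul_of_nonneg_right h1
        (show (0:ℝ) ≤ ε ^ 2 * U ^ 2 * V ^ 2 by positivity)]
    have e2 : 9 * ε ^ 7 * U * V ^ 3 ≤ ε ^ 2 * U ^ 2 * V ^ 2 / 16 := by
      have h5 : ε ^ 5 ≤ ε ^ 2 := pow_le_pow_of_le_one hε.le hε1 (by norm_num)
      have h1 : 9 * ε ^ 5 ≤ 1 / 16 := by nlinarith [h5, hsq]
      nlinarith [mul_le_mul_of_nonneg_right h1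
          (show (0:ℝ) ≤ ε ^ 2 * U * V ^ 3 by positivity),
        mul_le_mul_of_nonneg_left hVU
          (show (0:ℝ) ≤ ε ^ 2 * U * V ^ 2 / 16 by positivity)]
    linarith
  have hfinalS : ε ^ 7 * U * V ≤ (S.card : ℝ) := by
    have h := le_trans hkey hcardS
    exact le_of_mul_le_mul_right h hR0
  calc ε ^ 7 * U * V ≤ (S.card : ℝ) := hfinalS
    _ ≤ (((Finset.Icc (-⌊2 * U * V⌋) ⌊2 * U * V⌋).filter
        (fun n : ℤ => ∃ p ∈ Ω, ∃ q ∈ Ω, n = p.1 * p.2 + q.1 * q.2)).card : ℝ) := by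
      exact_mod_cast Finset.card_le_card hStarget

theorem sums_of_two_products (ε U V : ℝ) (hε : 0 < ε) (hε' : ε ≤ 2 ^ (-44 : ℤ))
    (hU : 64 / ε ≤ U) (hV : 64 / ε ≤ V)
    (Ω : Finset (ℤ × ℤ)) (hΩ : ∀ p ∈ Ω, |(p.1 : ℝ)| ≤ U ∧ |(p.2 : ℝ)| ≤ V)
    (hcard : ε * U * V ≤ (Ω.card : ℝ)) :
    ε ^ 7 * U * V ≤
      (((Finset.Icc (-⌊2 * U * V⌋) ⌊2 * U * V⌋).filter
        (fun n : ℤ => ∃ p ∈ Ω, ∃ q ∈ Ω, n = p.1 * p.2 + q.1 * q.2)).card : ℝ) := by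
  rcases le_total V U with hVU | hUV
  · exact key ε U V hε hε' hU hV hVU Ω hΩ hcard
  · have hΩ' : ∀ p ∈ Ω.image Prod.swap, |(p.1 : ℝ)| ≤ V ∧ |(p.2 : ℝ)| ≤ U := by
      intro p hp
      obtain ⟨q, hq, rfl⟩ := Finset.mem_image.mp hp
      exact ⟨(hΩ q hq).2, (hΩ q hq).1⟩
    have hcard' : ε * V * U ≤ ((Ω.image Prod.swap).card : ℝ) := by
      rw [Finset.card_image_of_injective _ Prod.swap_injective]
      calc ε * V * U = ε * U * V := by ring
        _ ≤ (Ω.card : ℝ) := hcard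
    have h := key ε V U hε hε' hV hU hUV (Ω.image Prod.swap) hΩ' hcard'
    have hmul : 2 * V * U = 2 * U * V := by ring
    have hset : (Finset.Icc (-⌊2 * V * U⌋) ⌊2 * V * U⌋).filter
          (fun n : ℤ => ∃ p ∈ Ω.image Prod.swap, ∃ q ∈ Ω.image Prod.swap,
            n = p.1 * p.2 + q.1 * q.2)
        = (Finset.Icc (-⌊2 * U * V⌋) ⌊2 * U * V⌋).filter
          (fun n : ℤ => ∃ p ∈ Ω, ∃ q ∈ Ω, n = p.1 * p.2 + q.1 * q.2) := by
      rw [hmul]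
      apply Finset.filter_congr
      intro n _
      constructor
      · rintro ⟨p, hp, q, hq, rfl⟩
        obtain ⟨p', hp', rfl⟩ := Finset.mem_image.mp hp
        obtain ⟨q', hq', rfl⟩ := Finset.mem_image.mp hq
        exact ⟨p', hp', q', hq', by simp [Prod.swap]; ring⟩
      · rintro ⟨p, hp, q, hq, rfl⟩
        exact ⟨p.swap, Finset.mem_image_of_mem _ hp, q.swap,
          Finset.mem_image_of_mem _ hq, by simp [Prod.swap]; ring⟩
    rw [hset] at h
    calc ε ^ 7 * U * V = ε ^ 7 * V * U := by ring
      _ ≤ _ := h
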